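/- Let k2 < a < 1/k1 with 0 < k1, k2 < 1, and suppose L > sqrt(d2/(a - k2))·π. Set δ = a - k2 - d2·π²/L² and φ(x) = sin(πx/L). Then δ > 0 and the function v̲(x) = δ·φ(x) satisfies the sub-solution inequality d2 v̲''(x) + v̲(x)(a - v̲(x) - k2·1) ≥ 0 for all x ∈ (0, L). -/

import Mathlib

open Real Set

lemma sin_deriv_aux (c δ : ℝ) :
    deriv (fun y : ℝ => δ * Real.sin (c * y)) = fun y => δ * c * Real.cos (c * y) := by
  funext y
  have h : HasDerivAt (fun y : ℝ => δ * Real.sin (c * y)) (δ * c * Real.cos (c * y)) y := by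
    have h1 : HasDerivAt (fun y : ℝ => c * y) c y := by
      simpa using (hasDerivAt_id y).const_mul c
    have h2 := (Real.hasDerivAt_sin (c * y)).comp y h1
    have := h2.const_mul δ
    exact this.congr_deriv (by ring)
  exact h.deriv

lemma cos_deriv_aux (c δ : ℝ) (x : ℝ) :
    deriv (fun y : ℝ => δ * Real.cos (c * y)) x = -(δ * c) * Real.sin (c * x) := by
  have h : HasDerivAt (fun y : ℝ => δ * Real.cos (c * y)) (-(δ * c) * Real.sin (c * x)) x := by
    have h1 : HasDerivAt (fun y : ℝ => c * y) c x := by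
      simpa using (hasDerivAt_id x).const_mul c
    have h2 := (Real.hasDerivAt_cos (c * x)).comp x h1
    have := h2.const_mul δ
    exact this.congr_deriv (by ring)
  exact h.deriv

/-- Sub-solution inequality for `v̲ = δ sin (π x / L)` in the barrier construction. -/
theorem subsolution_v_barrier
    (L d2 a k1 k2 : ℝ) (hd2 : 0 < d2)
    (hk1 : 0 < k1) (hk1' : k1 < 1) (hk2 : 0 < k2) (hk2' : k2 < 1)
    (ha1 : k2 < a) (ha2 : a < 1 / k1)
    (hLgt : L > Real.sqrt (d2 / (a - k2)) * π) :
    0 < a - k2 - d2 * π ^ 2 / L ^ 2 ∧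
    ∀ x ∈ Ioo (0 : ℝ) L,
      d2 * deriv (deriv (fun y : ℝ =>
          (a - k2 - d2 * π ^ 2 / L ^ 2) * Real.sin (π * y / L))) x
        + ((a - k2 - d2 * π ^ 2 / L ^ 2) * Real.sin (π * x / L)) *
            (a - (a - k2 - d2 * π ^ 2 / L ^ 2) * Real.sin (π * x / L) - k2 * 1) ≥ 0 := by
  have hak : 0 < a - k2 := by linarith
  have hq : 0 < d2 / (a - k2) := div_pos hd2 hak
  have hLpos : 0 < L := lt_trans (mul_pos (Real.sqrt_pos.mpr hq) Real.pi_pos) hLgt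
  have hsq : Real.sqrt (d2 / (a - k2)) ^ 2 = d2 / (a - k2) := Real.sq_sqrt hq.le
  have hL2 : d2 / (a - k2) * π ^ 2 < L ^ 2 := by
    have := mul_self_lt_mul_self (mul_nonneg (Real.sqrt_nonneg _) Real.pi_pos.le) hLgt
    nlinarith [Real.sq_sqrt hq.le]
  have hδ : 0 < a - k2 - d2 * π ^ 2 / L ^ 2 := by
    rw [sub_pos, div_lt_iff₀ (by positivity : (0:ℝ) < L ^ 2)]
    rw [div_mul_eq_mul_div, div_lt_iff₀ hak] at hL2
    nlinarith [hL2]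
  refine ⟨hδ, fun x hx => ?_⟩
  set δ := a - k2 - d2 * π ^ 2 / L ^ 2 with hδdef
  set c := π / L with hc
  have hcy : ∀ y : ℝ, π * y / L = c * y := fun y => by rw [hc]; ring
  have hd1 : deriv (fun y : ℝ => δ * Real.sin (π * y / L)) = fun y => δ * c * Real.cos (c * y) := by
    have : (fun y : ℝ => δ * Real.sin (π * y / L)) = fun y => δ * Real.sin (c * y) := by
      funext y; rw [hcy]
    rw [this, sin_deriv_aux]
  have hd2' : deriv (deriv (fun y : ℝ => δ * Real.sin (π * y / L))) x
      = -(δ * c * c) * Real.sin (c * x) := by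
    rw [hd1, cos_deriv_aux (c := c) (δ := δ * c) x]
  rw [hd2', hcy x]
  have hc2 : c ^ 2 = π ^ 2 / L ^ 2 := by rw [hc]; ring
  have hd2c : d2 * c * c = a - k2 - δ := by
    have : c * c = π ^ 2 / L ^ 2 := by rw [hc]; ring
    rw [mul_assoc, this, hδdef]; ring
  set s := Real.sin (c * x) with hs
  have hs0 : 0 ≤ s := by
    apply Real.sin_nonneg_of_nonneg_of_le_pi
    · exact mul_nonneg (div_nonneg Real.pi_pos.le hLpos.le) hx.1.le
    · rw [hc]
      rw [div_mul_eq_mul_div, div_le_iff₀ hLpos]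
      nlinarith [hx.2, Real.pi_pos]
  have hs1 : s ≤ 1 := Real.sin_le_one _
  have key : d2 * (-(δ * c * c) * s) + δ * s * (a - δ * s - k2 * 1)
      = δ ^ 2 * s * (1 - s) := by
    linear_combination (-(δ * s)) * hd2c
  rw [key]
  have := mul_nonneg (mul_nonneg (sq_nonneg δ) hs0) (sub_nonneg.mpr hs1)
  linarith
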